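/- Let H and (H_j)_{j=1}^n be mutually independent random variables, each exponentially distributed with rate 1. Let R > 0, T > 0, α > 0 and r_1, ..., r_n > 0 with n ≥ 1. Then the probability that H · R^{-α} / (Σ_{j=1}^n H_j · r_j^{-α}) ≥ T equals ∏_{j=1}^n 1/(1 + T · (R/r_j)^α). -/

import Mathlib

open MeasureTheory ProbabilityTheory Real Set ENNReal

section AuxSIR

lemma expMeasure_one_def' : expMeasure 1 = volume.withDensity (exponentialPDF 1) := rfl

lemma expMeasure_one_apply' {s : Set ℝ} (hs : MeasurableSet s) :
    expMeasure 1 s = ∫⁻ x in s, exponentialPDF 1 x := by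
  rw [expMeasure_one_def', withDensity_apply _ hs]

lemma expMeasure_one_Ici {c : ℝ} (hc : 0 ≤ c) :
    expMeasure 1 (Ici c) = ENNReal.ofReal (exp (-c)) := by
  rw [expMeasure_one_apply' measurableSet_Ici]
  rw [setLIntegral_congr_fun measurableSet_Ici
    (fun x (hx : c ≤ x) => by
      rw [exponentialPDF_of_nonneg (hc.trans hx), one_mul, one_mul])]
  rw [setLIntegral_congr (Ioi_ae_eq_Ici (μ := volume) (a := c)).symm]
  rw [← ofReal_integral_eq_lintegral_ofReal]
  · rw [integral_exp_neg_Ioi]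
  · have := exp_neg_integrableOn_Ioi c one_pos; simp only [neg_mul, one_mul] at this; exact this
  · exact ae_of_all _ fun x => (exp_pos _).le

lemma expMeasure_one_Iic_zero : expMeasure 1 (Iic (0:ℝ)) = 0 := by
  rw [expMeasure_one_apply' measurableSet_Iic,
    setLIntegral_congr (Iio_ae_eq_Iic (μ := volume) (a := (0:ℝ))).symm]
  exact lintegral_exponentialPDF_of_nonpos le_rfl

lemma measurable_exponentialPDF' : Measurable (exponentialPDF 1) :=
  (measurable_exponentialPDFReal 1).ennreal_ofReal

lemma lintegral_exp_neg_mul_expMeasure {a : ℝ} (ha : 0 ≤ a) :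
    ∫⁻ x, ENNReal.ofReal (exp (-(a * x))) ∂(expMeasure 1) = ENNReal.ofReal (1 / (1 + a)) := by
  have hb : (0:ℝ) < 1 + a := by linarith
  rw [expMeasure_one_def',
    lintegral_withDensity_eq_lintegral_mul _ measurable_exponentialPDF'
      (by fun_prop : Measurable fun x => ENNReal.ofReal (exp (-(a * x))))]
  have heq : (exponentialPDF 1 * fun x => ENNReal.ofReal (exp (-(a * x))))
      = (Ici (0:ℝ)).indicator (fun x => ENNReal.ofReal (exp (-((1 + a) * x)))) := by
    ext x
    by_cases hx : (0:ℝ) ≤ x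
    · simp only [Pi.mul_apply, indicator_of_mem (mem_Ici.2 hx),
        exponentialPDF_of_nonneg hx, one_mul]
      rw [← ENNReal.ofReal_mul (exp_pos _).le, ← Real.exp_add]
      ring_nf
    · simp only [Pi.mul_apply, indicator_of_notMem (fun h => hx (mem_Ici.1 h)),
        exponentialPDF_of_neg (lt_of_not_ge hx), zero_mul]
  rw [heq, lintegral_indicator measurableSet_Ici _,
    setLIntegral_congr (Ioi_ae_eq_Ici (μ := volume) (a := (0:ℝ))).symm,
    ← ofReal_integral_eq_lintegral_ofReal]
  · rw [integral_comp_mul_left_Ioi (fun x => exp (-x)) 0 hb]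
    simp [integral_exp_neg_Ioi, integral_exp_Iic_zero, one_div]
  · have h := exp_neg_integrableOn_Ioi 0 hb
    simp only [neg_mul] at h
    exact h
  · exact ae_of_all _ fun x => (exp_pos _).le

lemma lintegral_pi_prod {n : ℕ} (ν : Measure ℝ) [SigmaFinite ν] {f : Fin n → ℝ → ℝ≥0∞}
    (hf : ∀ i, Measurable (f i)) :
    ∫⁻ y : Fin n → ℝ, ∏ i, f i (y i) ∂(Measure.pi fun _ => ν)
      = ∏ i, ∫⁻ x, f i x ∂ν := by
  induction n with
  | zero => simp [lintegral_const, Measure.pi_univ]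
  | succ n ih =>
    have A := measurePreserving_piFinSuccAbove (fun _ : Fin (n+1) => ν) 0
    set e := MeasurableEquiv.piFinSuccAbove (fun _ : Fin (n+1) => ℝ) 0 with he
    have hg : Measurable fun p : ℝ × (Fin n → ℝ) =>
        f 0 p.1 * ∏ j, f j.succ (p.2 j) :=
      ((hf 0).comp measurable_fst).mul
        (Finset.measurable_prod _ fun j _ => (hf j.succ).comp
          ((measurable_pi_apply j).comp measurable_snd))
    calc ∫⁻ y : Fin (n+1) → ℝ, ∏ i, f i (y i) ∂(Measure.pi fun _ => ν)
        = ∫⁻ y : Fin (n+1) → ℝ, f 0 ((e y).1) * ∏ j, f j.succ ((e y).2 j)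
            ∂(Measure.pi fun _ => ν) := by
          apply lintegral_congr fun y => ?_
          rw [Fin.prod_univ_succ]
          simp [he, MeasurableEquiv.piFinSuccAbove, Fin.zero_succAbove, Fin.tail]
      _ = ∫⁻ p : ℝ × (Fin n → ℝ), f 0 p.1 * ∏ j, f j.succ (p.2 j)
            ∂(ν.prod (Measure.pi fun _ => ν)) := A.lintegral_comp hg
      _ = (∫⁻ x, f 0 x ∂ν) * ∏ j : Fin n, ∫⁻ x, f j.succ x ∂ν := by
          rw [lintegral_prod_mul (f := f 0)
            (g := fun y : Fin n → ℝ => ∏ j, f j.succ (y j)) (hf 0).aemeasurable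
            (Finset.measurable_prod _ fun (j : Fin n) _ =>
              (hf j.succ).comp (measurable_pi_apply j)).aemeasurable]
          rw [ih fun j => hf j.succ]
      _ = ∏ i, ∫⁻ x, f i x ∂ν := by rw [Fin.prod_univ_succ]

/-- a.e. every coordinate of a pi-exponential vector is positive. -/
lemma pi_expMeasure_ae_pos {m : ℕ} :
    ∀ᵐ y ∂(Measure.pi fun _ : Fin m => expMeasure 1), ∀ i, 0 < y i := by
  haveI : IsProbabilityMeasure (expMeasure 1) := isProbabilityMeasure_expMeasure one_pos
  rw [ae_all_iff]
  intro i
  rw [ae_iff]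
  have hset : {y : Fin m → ℝ | ¬ 0 < y i}
      = Set.pi univ (fun k => if k = i then Iic (0:ℝ) else univ) := by
    ext y
    simp only [mem_setOf_eq, not_lt, Set.mem_univ_pi]
    constructor
    · intro h k
      by_cases hk : k = i
      · subst hk; simp [h]
      · simp [hk]
    · intro h
      have := h i
      simpa using this
  rw [hset, Measure.pi_pi]
  apply Finset.prod_eq_zero (Finset.mem_univ i)
  simp [expMeasure_one_Iic_zero]

end AuxSIR



/-- SIR success probability under Rayleigh fading: if `H` and `H' 1, ..., H' n` are
mutually independent rate-1 exponential random variables, `R, T, α > 0`, `r j > 0` and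
`n ≥ 1`, then `P( H * R^(-α) / (∑ j, H' j * r j^(-α)) ≥ T ) = ∏ j, 1 / (1 + T * (R / r j)^α)`. -/
theorem prob_sir_ge_threshold
    {Ω : Type*} [MeasurableSpace Ω] (μ : Measure Ω) [IsProbabilityMeasure μ]
    (n : ℕ) (hn : 1 ≤ n) (H : Ω → ℝ) (H' : Fin n → Ω → ℝ)
    (R T α : ℝ) (hR : 0 < R) (hT : 0 < T) (hα : 0 < α)
    (r : Fin n → ℝ) (hr : ∀ j, 0 < r j)
    (hindep : iIndepFun (Fin.cons H H' : Fin (n + 1) → Ω → ℝ) μ)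
    (hH : μ.map H = expMeasure 1)
    (hH' : ∀ j, μ.map (H' j) = expMeasure 1) :
    μ {ω | H ω * R ^ (-α) / (∑ j, H' j ω * (r j) ^ (-α)) ≥ T}
      = ENNReal.ofReal (∏ j, 1 / (1 + T * (R / r j) ^ α)) := by
  haveI : IsProbabilityMeasure (expMeasure 1) := isProbabilityMeasure_expMeasure one_pos
  haveI : Nonempty (Fin n) := ⟨⟨0, hn⟩⟩
  -- abbreviations
  set c : Fin n → ℝ := fun j => T * (R / r j) ^ α with hc
  have hcpos : ∀ j, 0 < c j := fun j =>
    mul_pos hT (rpow_pos_of_pos (div_pos hR (hr j)) α)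
  -- marginals of the cons family
  have hconsmap : ∀ i : Fin (n+1),
      μ.map ((Fin.cons H H' : Fin (n+1) → Ω → ℝ) i) = expMeasure 1 := by
    intro i
    induction i using Fin.cases with
    | zero => simpa using hH
    | succ j => simpa using hH' j
  have hcons : ∀ i : Fin (n+1),
      AEMeasurable ((Fin.cons H H' : Fin (n+1) → Ω → ℝ) i) μ := by
    intro i
    by_contra h
    have h2 := hconsmap i
    rw [Measure.map_of_not_aemeasurable h] at h2
    exact (IsProbabilityMeasure.ne_zero (expMeasure 1)) h2.symm
  -- joint vector and joint law
  set X : Ω → (Fin (n+1) → ℝ) := fun ω i => (Fin.cons H H' : Fin (n+1) → Ω → ℝ) i ω with hXdef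
  have hXm : AEMeasurable X μ := by
    refine ⟨fun ω i => (hcons i).mk _ ω,
      measurable_pi_lambda _ fun i => (hcons i).measurable_mk, ?_⟩
    have hae : ∀ᵐ ω ∂μ, ∀ i : Fin (n+1),
        (Fin.cons H H' : Fin (n+1) → Ω → ℝ) i ω = (hcons i).mk _ ω :=
      ae_all_iff.2 fun i => (hcons i).ae_eq_mk
    filter_upwards [hae] with ω h
    funext i
    exact h i
  set P : Measure (Fin (n+1) → ℝ) := Measure.pi (fun _ => expMeasure 1) with hPdef
  have hmap : μ.map X = P := by
    refine (Measure.pi_eq fun s hs => ?_).symm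
    rw [Measure.map_apply_of_aemeasurable hXm (MeasurableSet.univ_pi hs)]
    have hpre : X ⁻¹' (Set.pi univ s)
        = ⋂ i, (Fin.cons H H' : Fin (n+1) → Ω → ℝ) i ⁻¹' s i := by
      ext ω
      simp [hXdef, Set.mem_univ_pi, Set.mem_iInter]
    rw [hpre, hindep.meas_iInter (fun i => ⟨s i, hs i, rfl⟩)]
    exact Finset.prod_congr rfl fun i _ => by
      rw [← hconsmap i, Measure.map_apply_of_aemeasurable (hcons i) (hs i)]
  -- the event as a set in the product space
  set S : Set (Fin (n+1) → ℝ) :=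
    {x | T ≤ x 0 * R ^ (-α) / (∑ j, x j.succ * (r j) ^ (-α))} with hSdef
  have hsum_m : Measurable fun x : Fin (n+1) → ℝ => ∑ j, x j.succ * (r j) ^ (-α) :=
    Finset.measurable_sum _ fun j _ => (measurable_pi_apply j.succ).mul_const _
  have hS : MeasurableSet S :=
    measurableSet_le measurable_const (((measurable_pi_apply 0).mul_const _).div hsum_m)
  have hAS : {ω | H ω * R ^ (-α) / (∑ j, H' j ω * (r j) ^ (-α)) ≥ T} = X ⁻¹' S := by
    ext ω
    simp [hSdef, hXdef, ge_iff_le]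
  rw [hAS, ← Measure.map_apply_of_aemeasurable hXm hS, hmap]
  -- replace S by the linear version S'
  set S' : Set (Fin (n+1) → ℝ) := {x | ∑ j, c j * x j.succ ≤ x 0} with hS'def
  have harith : ∀ x : Fin (n+1) → ℝ, (∀ j : Fin n, 0 < x j.succ) →
      (x ∈ S ↔ x ∈ S') := by
    intro x hx
    have hRα : (0:ℝ) < R ^ α := rpow_pos_of_pos hR α
    have hsumpos : 0 < ∑ j, x j.succ * (r j) ^ (-α) :=
      Finset.sum_pos (fun j _ => mul_pos (hx j) (rpow_pos_of_pos (hr j) _))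
        Finset.univ_nonempty
    have hterm : ∀ j, c j * x j.succ = T * R ^ α * (x j.succ * (r j) ^ (-α)) := by
      intro j
      simp only [hc]
      rw [div_rpow hR.le (hr j).le, rpow_neg (hr j).le, div_eq_mul_inv]
      ring
    simp only [hSdef, hS'def, mem_setOf_eq]
    rw [le_div_iff₀ hsumpos]
    constructor
    · intro h
      calc ∑ j, c j * x j.succ = T * R ^ α * ∑ j, x j.succ * (r j) ^ (-α) := by
            rw [Finset.mul_sum]
            exact Finset.sum_congr rfl fun j _ => hterm j
        _ = (T * ∑ j, x j.succ * (r j) ^ (-α)) * R ^ α := by ring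
        _ ≤ (x 0 * R ^ (-α)) * R ^ α := by
            exact mul_le_mul_of_nonneg_right h hRα.le
        _ = x 0 := by
            rw [rpow_neg hR.le]
            field_simp
    · intro h
      have h2 : (T * ∑ j, x j.succ * (r j) ^ (-α)) * R ^ α ≤ x 0 := by
        calc (T * ∑ j, x j.succ * (r j) ^ (-α)) * R ^ α
            = ∑ j, c j * x j.succ := by
              rw [Finset.mul_sum]
              rw [Finset.sum_mul]
              exact Finset.sum_congr rfl fun j _ => by rw [hterm j]; ring
          _ ≤ x 0 := h
      calc T * ∑ j, x j.succ * (r j) ^ (-α)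
          = ((T * ∑ j, x j.succ * (r j) ^ (-α)) * R ^ α) * R ^ (-α) := by
            rw [rpow_neg hR.le]
            field_simp
        _ ≤ x 0 * R ^ (-α) := by
            exact mul_le_mul_of_nonneg_right h2 (rpow_pos_of_pos hR _).le
  have haeS : S =ᵐ[P] S' := by
    have hpos : ∀ᵐ x ∂P, ∀ i : Fin (n+1), 0 < x i := pi_expMeasure_ae_pos
    filter_upwards [hpos] with x hx
    exact eq_iff_iff.2 (harith x fun j => hx j.succ)
  rw [measure_congr haeS]
  -- split off the first coordinate
  have mp := measurePreserving_piFinSuccAbove (fun _ : Fin (n+1) => expMeasure 1) 0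
  set e := MeasurableEquiv.piFinSuccAbove (fun _ : Fin (n+1) => ℝ) 0 with he
  set Q : Measure (Fin n → ℝ) := Measure.pi (fun _ => expMeasure 1) with hQdef
  set s2 : Set (ℝ × (Fin n → ℝ)) := {p | ∑ j, c j * p.2 j ≤ p.1} with hs2def
  have hs2 : MeasurableSet s2 :=
    measurableSet_le (Finset.measurable_sum _ fun j _ =>
      (measurable_const.mul ((measurable_pi_apply j).comp measurable_snd))) measurable_fst
  have hpre2 : e ⁻¹' s2 = S' := by
    ext x
    simp [he, hs2def, hS'def, MeasurableEquiv.piFinSuccAbove, Fin.zero_succAbove, Fin.tail]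
  have hPS' : P S' = ((expMeasure 1).prod Q) s2 := by
    rw [← hpre2]
    exact mp.measure_preimage hs2.nullMeasurableSet
  rw [hPS', Measure.prod_apply_symm hs2]
  have hQpos : ∀ᵐ y ∂Q, ∀ j, 0 < y j := pi_expMeasure_ae_pos
  have hinner : ∀ᵐ y ∂Q, (expMeasure 1) ((fun x => (x, y)) ⁻¹' s2)
      = ENNReal.ofReal (exp (-(∑ j, c j * y j))) := by
    filter_upwards [hQpos] with y hy
    have hpre3 : ((fun x : ℝ => (x, y)) ⁻¹' s2) = Ici (∑ j, c j * y j) := by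
      ext x
      simp [hs2def]
    rw [hpre3, expMeasure_one_Ici]
    exact Finset.sum_nonneg fun j _ => (mul_pos (hcpos j) (hy j)).le
  rw [lintegral_congr_ae hinner]
  have hsplit : (fun y : Fin n → ℝ => ENNReal.ofReal (exp (-(∑ j, c j * y j))))
      = fun y => ∏ j, ENNReal.ofReal (exp (-(c j * y j))) := by
    funext y
    rw [← ENNReal.ofReal_prod_of_nonneg (fun j _ => (exp_pos _).le), ← Real.exp_sum]
    congr 1
    rw [← Finset.sum_neg_distrib]
  rw [hsplit, hQdef]
  rw [lintegral_pi_prod (f := fun (j : Fin n) (x : ℝ) => ENNReal.ofReal (exp (-(c j * x))))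
    (expMeasure 1) (fun j => by fun_prop)]
  rw [Finset.prod_congr rfl fun j _ => lintegral_exp_neg_mul_expMeasure (hcpos j).le,
    ← ENNReal.ofReal_prod_of_nonneg (fun j _ => by have := hcpos j; positivity)]
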